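/- If S is a stationary set of countable limit ordinals carrying a ladder system ⟨x_α : α ∈ S⟩, then the associated Baumgartner type (S, <_lex) is not σ-scattered. -/

import Mathlib

set_option linter.unreachableTactic false
set_option linter.unusedTactic false
set_option maxHeartbeats 1000000

/-- The first uncountable ordinal, `ω₁`. -/
noncomputable def ω1 : Ordinal := (Cardinal.aleph 1).ord

/-- `x` is a ladder system on the set `S` of countable limit ordinals: each `α ∈ S` is a
countable limit ordinal and `x α : ℕ → Ordinal` is strictly increasing with range contained
and cofinal in `α`. -/
def IsLadderOn (S : Set Ordinal) (x : Ordinal → ℕ → Ordinal) : Prop :=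
  ∀ α ∈ S, α < ω1 ∧ Order.IsSuccLimit α ∧ StrictMono (x α) ∧ (∀ n : ℕ, x α n < α) ∧
    ∀ β < α, ∃ n : ℕ, β < x α n

/-- The lexicographic order associated to a ladder system: `α <lex β` iff at the least `n`
where `x α` and `x β` differ we have `x α n < x β n`. -/
def LexLt (x : Ordinal → ℕ → Ordinal) (α β : Ordinal) : Prop :=
  ∃ n : ℕ, (∀ m < n, x α m = x β m) ∧ x α n < x β n

/-- `C` is a club subset of `ω₁`: a set of countable ordinals which is unbounded in `ω₁`
and contains the supremum of each of its nonempty bounded subsets. -/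
def IsClubIn (C : Set Ordinal) : Prop :=
  C ⊆ Set.Iio ω1 ∧ (∀ β < ω1, ∃ γ ∈ C, β < γ) ∧
    ∀ D ⊆ C, D.Nonempty → (∃ β < ω1, ∀ γ ∈ D, γ ≤ β) → sSup D ∈ C

/-- `S` is a stationary subset of `ω₁`: it meets every club subset of `ω₁`. -/
def IsStat (S : Set Ordinal) : Prop := ∀ C : Set Ordinal, IsClubIn C → (S ∩ C).Nonempty

/-- A set `A` is scattered with respect to the relation `r` if there is no map of `ℚ`
into `A` which is strictly increasing from `<` to `r`. -/
def RelScatteredOn (r : Ordinal → Ordinal → Prop) (A : Set Ordinal) : Prop :=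
  ¬ ∃ f : ℚ → Ordinal, (∀ q : ℚ, f q ∈ A) ∧ ∀ p q : ℚ, p < q → r (f p) (f q)

/-- `(S, r)` is σ-scattered: `S` is a countable union of subsets, each scattered
with respect to `r`. -/
def RelSigmaScatteredOn (r : Ordinal → Ordinal → Prop) (S : Set Ordinal) : Prop :=
  ∃ A : ℕ → Set Ordinal, (⋃ n, A n) = S ∧ ∀ n : ℕ, RelScatteredOn r (A n)


lemma omega1_isLimit : Order.IsSuccLimit ω1 := Cardinal.isSuccLimit_ord (Cardinal.aleph0_le_aleph 1)
lemma omega1_cof : ω1.cof = Cardinal.aleph 1 := Cardinal.isRegular_aleph_one.cof_eq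

lemma sSup_lt_omega1 {D : Set Ordinal} (hc : D.Countable) (h : ∀ γ ∈ D, γ < ω1) :
    sSup D < ω1 := by
  rcases D.eq_empty_or_nonempty with rfl | hne
  · simpa using omega1_isLimit.pos
  · obtain ⟨f, rfl⟩ := hc.exists_eq_range hne
    rw [sSup_range]
    refine Ordinal.iSup_lt_ord_lift ?_ (fun i => h _ ⟨i, rfl⟩)
    rw [omega1_cof]
    simpa using Cardinal.aleph0_lt_aleph_one

lemma countable_Iio {α : Ordinal} (h : α < ω1) : (Set.Iio α).Countable := by
  rw [Cardinal.countable_iff_lt_aleph_one, Ordinal.mk_Iio_ordinal]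
  have h2 : α.card < Cardinal.aleph 1 := by rwa [← Cardinal.lt_ord]
  have := Cardinal.lift_lt.{_, _+1}.mpr h2
  rwa [Cardinal.lift_aleph, Ordinal.lift_one] at this

lemma club_Iio : IsClubIn (Set.Iio ω1) := by
  refine ⟨le_refl _, fun β hβ => ⟨β + 1, omega1_isLimit.succ_lt hβ, lt_add_one β⟩, ?_⟩
  rintro D hD ⟨d, hd⟩ ⟨β, hβ, hb⟩
  exact lt_of_le_of_lt (csSup_le ⟨d, hd⟩ hb) hβ

lemma IsStat.nonempty {X : Set Ordinal} (h : IsStat X) : X.Nonempty :=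
  ((h _ club_Iio).mono (Set.inter_subset_left))

lemma IsStat.mono {X Y : Set Ordinal} (hXY : X ⊆ Y) (h : IsStat X) : IsStat Y :=
  fun C hC => ((h C hC).mono (Set.inter_subset_inter_left _ hXY))

lemma club_iInter {ι : Sort*} [Countable ι] [Nonempty ι] (C : ι → Set Ordinal)
    (h : ∀ i, IsClubIn (C i)) : IsClubIn (⋂ i, C i) := by
  obtain ⟨σ, hσ⟩ := exists_surjective_nat ι
  refine ⟨(Set.iInter_subset _ (Classical.arbitrary ι)).trans (h _).1, ?_, ?_⟩
  · intro β hβ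
    have hstep : ∀ (n : ℕ) (o : {o : Ordinal // o < ω1}),
        ∃ γ : {o : Ordinal // o < ω1}, γ.1 ∈ C (σ n) ∧ o.1 < γ.1 := by
      intro n o
      obtain ⟨γ, hγ, hlt⟩ := (h (σ n)).2.1 o.1 o.2
      exact ⟨⟨γ, (h _).1 hγ⟩, hγ, hlt⟩
    choose nxt hnxt1 hnxt2 using hstep
    let F : ℕ → {o : Ordinal // o < ω1} := fun n => Nat.rec ⟨β, hβ⟩ (fun k ih => nxt k.unpair.1 ih) n
    have hFs : ∀ k, F (k+1) = nxt k.unpair.1 (F k) := fun k => rfl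
    have hmono : StrictMono (fun k => (F k).1) :=
      strictMono_nat_of_lt_succ (fun k => hnxt2 _ _)
    set δ := sSup (Set.range fun k => (F k).1) with hδdef
    have hδ : δ < ω1 := sSup_lt_omega1 (Set.countable_range _)
      (by rintro _ ⟨k, rfl⟩; exact (F k).2)
    have hbdd : ∀ k, (F k).1 ≤ δ := fun k =>
      le_csSup ⟨ω1, by rintro _ ⟨j, rfl⟩; exact le_of_lt (F j).2⟩ ⟨k, rfl⟩
    refine ⟨δ, ?_, lt_of_lt_of_le (hmono (Nat.lt_succ_self 0)) (hbdd 1)⟩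
    rw [Set.mem_iInter]
    intro i
    obtain ⟨n, rfl⟩ := hσ i
    set D := (fun k => (F (k+1)).1) '' {k | k.unpair.1 = n} with hDdef
    have hDsub : D ⊆ C (σ n) := by
      rintro _ ⟨k, hk, rfl⟩
      simp only [Set.mem_setOf_eq] at hk
      show ((F (k+1)) : Ordinal) ∈ C (σ n)
      rw [hFs k, hk]
      exact hnxt1 n (F k)
    have hDbd : BddAbove D := ⟨δ, by rintro _ ⟨k, _, rfl⟩; simpa using hbdd (k+1)⟩
    have hDne : D.Nonempty := ⟨_, ⟨Nat.pair n 0, by simp [Nat.unpair_pair], rfl⟩⟩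
    have hmem := (h (σ n)).2.2 D hDsub hDne
      ⟨δ, hδ, by rintro _ ⟨k, _, rfl⟩; simpa using hbdd (k+1)⟩
    have hsup : sSup D = δ := by
      apply le_antisymm
      · exact csSup_le hDne (by rintro _ ⟨k, _, rfl⟩; simpa using hbdd (k+1))
      · refine csSup_le ⟨_, 0, rfl⟩ ?_
        rintro _ ⟨j, rfl⟩
        have hj : (F j).1 ≤ (F (Nat.pair n j + 1)).1 := by
          simpa using hmono.monotone (Nat.le_succ_of_le (Nat.right_le_pair n j))
        exact hj.trans (le_csSup hDbd ⟨Nat.pair n j, by simp [Nat.unpair_pair], rfl⟩)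
    rwa [hsup] at hmem
  · intro D hD hne hbd
    rw [Set.mem_iInter]
    intro i
    exact (h i).2.2 D (fun y hy => Set.mem_iInter.mp (hD hy) i) hne hbd

/-- The diagonal intersection. -/
def DiagInter (C : Ordinal → Set Ordinal) : Set Ordinal :=
  {δ | δ < ω1 ∧ ∀ γ < δ, δ ∈ C γ}

lemma club_diagInter (C : Ordinal → Set Ordinal) (h : ∀ γ, IsClubIn (C γ)) :
    IsClubIn (DiagInter C) := by
  refine ⟨fun δ hδ => hδ.1, ?_, ?_⟩
  · intro β hβ
    have hstep : ∀ o : {o : Ordinal // o < ω1},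
        ∃ γ : {o : Ordinal // o < ω1}, (∀ γ' ≤ o.1, γ.1 ∈ C γ') ∧ o.1 < γ.1 := by
      intro o
      have hsub : Set.Iic o.1 ⊆ Set.Iio (Order.succ o.1) :=
        fun γ hγ => Set.mem_Iio.mpr (lt_of_le_of_lt (Set.mem_Iic.mp hγ) (Order.lt_succ _))
      have hcnt : (Set.Iic o.1).Countable :=
        Set.Countable.mono hsub (countable_Iio (omega1_isLimit.succ_lt o.2))
      haveI := hcnt.to_subtype
      haveI : Nonempty (Set.Iic o.1) := ⟨⟨0, Set.mem_Iic.mpr (zero_le (a := o.1))⟩⟩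
      have hclub := club_iInter (fun γ : Set.Iic o.1 => C γ.1) (fun γ => h γ.1)
      obtain ⟨γ, hγ, hlt⟩ := hclub.2.1 o.1 o.2
      refine ⟨⟨γ, hclub.1 hγ⟩, ?_, hlt⟩
      intro γ' hγ'
      exact Set.mem_iInter.mp hγ ⟨γ', hγ'⟩
    choose nxt hnxt1 hnxt2 using hstep
    let F : ℕ → {o : Ordinal // o < ω1} := fun n => Nat.rec ⟨β, hβ⟩ (fun _ ih => nxt ih) n
    have hFs : ∀ k, F (k+1) = nxt (F k) := fun k => rfl
    have hmono : StrictMono (fun k => (F k).1) :=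
      strictMono_nat_of_lt_succ (fun k => hnxt2 _)
    set δ := sSup (Set.range fun k => (F k).1) with hδdef
    have hδ : δ < ω1 := sSup_lt_omega1 (Set.countable_range _)
      (by rintro _ ⟨k, rfl⟩; exact (F k).2)
    have hbdd : ∀ k, (F k).1 ≤ δ := fun k =>
      le_csSup ⟨ω1, by rintro _ ⟨j, rfl⟩; exact le_of_lt (F j).2⟩ ⟨k, rfl⟩
    refine ⟨δ, ⟨hδ, ?_⟩, lt_of_lt_of_le (hmono (Nat.lt_succ_self 0)) (hbdd 1)⟩
    intro γ hγ
    have hk : ∃ k, γ < (F k).1 := by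
      by_contra hcon
      push_neg at hcon
      have hle : sSup (Set.range fun k => (F k).1) ≤ γ :=
        csSup_le ⟨(F 0).1, 0, rfl⟩ (by rintro _ ⟨k, rfl⟩; exact hcon k)
      exact absurd hle (not_le.mpr hγ)
    obtain ⟨k, hk⟩ := hk
    set D := (fun j => (F (j+1)).1) '' {j | k ≤ j} with hDdef
    have hDsub : D ⊆ C γ := by
      rintro _ ⟨j, hj, rfl⟩
      simp only [Set.mem_setOf_eq] at hj
      show ((F (j+1)) : Ordinal) ∈ C γ
      rw [hFs j]
      exact hnxt1 (F j) γ (le_of_lt (lt_of_lt_of_le hk (hmono.monotone hj)))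
    have hDbd : BddAbove D := ⟨δ, by rintro _ ⟨j, _, rfl⟩; simpa using hbdd (j+1)⟩
    have hDne : D.Nonempty := ⟨(F (k+1)).1, Set.mem_image_of_mem _ (show k ∈ {j | k ≤ j} from le_refl k)⟩
    have hmem := (h γ).2.2 D hDsub hDne
      ⟨δ, hδ, by rintro _ ⟨j, _, rfl⟩; simpa using hbdd (j+1)⟩
    have hsup : sSup D = δ := by
      apply le_antisymm
      · exact csSup_le hDne (by rintro _ ⟨j, _, rfl⟩; simpa using hbdd (j+1))
      · refine csSup_le ⟨_, 0, rfl⟩ ?_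
        rintro _ ⟨j, rfl⟩
        have hj : (F j).1 ≤ (F (max j k + 1)).1 := by
          simpa using hmono.monotone (Nat.le_succ_of_le (le_max_left j k))
        exact hj.trans (le_csSup hDbd ⟨max j k, le_max_right j k, rfl⟩)
    rwa [hsup] at hmem
  · rintro D hD hne ⟨β, hβ, hb⟩
    have hsb : sSup D < ω1 := lt_of_le_of_lt (csSup_le hne hb) hβ
    refine ⟨hsb, ?_⟩
    intro γ hγ
    have hDbd : BddAbove D := ⟨β, hb⟩
    obtain ⟨a, haD, hγa⟩ := (lt_csSup_iff hDbd hne).mp hγ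
    set D' := {d ∈ D | γ < d} with hD'def
    have hD'sub : D' ⊆ C γ := fun d hd => ((hD hd.1).2 γ hd.2)
    have hD'ne : D'.Nonempty := ⟨a, haD, hγa⟩
    have hsup : sSup D' = sSup D := by
      apply le_antisymm
      · exact csSup_le hD'ne (fun d hd => le_csSup hDbd hd.1)
      · refine csSup_le hne ?_
        intro d hd
        rcases le_or_gt d γ with hdγ | hdγ
        · exact le_trans (le_trans hdγ (le_of_lt hγa))
            (le_csSup ⟨β, fun e he => hb e he.1⟩ ⟨haD, hγa⟩)
        · exact le_csSup ⟨β, fun e he => hb e he.1⟩ ⟨hd, hdγ⟩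
    have := (h γ).2.2 D' hD'sub hD'ne ⟨β, hβ, fun d hd => hb d hd.1⟩
    rwa [hsup] at this

lemma exists_stat_of_iUnion {A : ℕ → Set Ordinal} (h : IsStat (⋃ n, A n)) :
    ∃ n, IsStat (A n) := by
  by_contra hcon
  push_neg at hcon
  have hcl : ∀ n, ∃ C, IsClubIn C ∧ A n ∩ C = ∅ := by
    intro n
    have := hcon n
    unfold IsStat at this
    push_neg at this
    obtain ⟨C, hC, hne⟩ := this
    exact ⟨C, hC, hne⟩
  choose C hC hCE using hcl
  obtain ⟨α, hαU, hαI⟩ := h _ (club_iInter C hC)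
  obtain ⟨n, hn⟩ := Set.mem_iUnion.mp hαU
  exact absurd (Set.mem_inter hn (Set.mem_iInter.mp hαI n)) (by rw [hCE n]; exact id)

lemma not_stat_subsingleton {X : Set Ordinal} (h : X.Subsingleton) : ¬ IsStat X := by
  intro hX
  obtain ⟨α, hα, hα1⟩ := hX _ club_Iio
  have hclub : IsClubIn {γ | α < γ ∧ γ < ω1} := by
    refine ⟨fun γ hγ => hγ.2, ?_, ?_⟩
    · intro β hβ
      refine ⟨max α β + 1, ⟨?_, ?_⟩, ?_⟩
      · exact lt_of_le_of_lt (le_max_left α β) (lt_add_one _)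
      · exact omega1_isLimit.succ_lt (max_lt hα1 hβ)
      · exact lt_of_le_of_lt (le_max_right α β) (lt_add_one _)
    · rintro D hD ⟨d, hd⟩ ⟨β, hβ, hb⟩
      exact ⟨lt_of_lt_of_le (hD hd).1 (le_csSup ⟨β, hb⟩ hd),
        lt_of_le_of_lt (csSup_le ⟨d, hd⟩ hb) hβ⟩
  obtain ⟨α', hα', hgt⟩ := hX _ hclub
  exact absurd (h hα' hα) (ne_of_gt hgt.1)

lemma fodor {T : Set Ordinal} (hT : IsStat T) (f : Ordinal → Ordinal)
    (hf : ∀ α ∈ T, f α < α) : ∃ γ, IsStat {α ∈ T | f α = γ} := by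
  by_contra hcon
  push_neg at hcon
  have hcl : ∀ γ, ∃ C, IsClubIn C ∧ {α ∈ T | f α = γ} ∩ C = ∅ := by
    intro γ
    have := hcon γ
    unfold IsStat at this
    push_neg at this
    obtain ⟨C, hC, hne⟩ := this
    exact ⟨C, hC, hne⟩
  choose C hC hCE using hcl
  obtain ⟨α, hαT, hαD⟩ := hT _ (club_diagInter C hC)
  have : α ∈ {β ∈ T | f β = f α} ∩ C (f α) :=
    ⟨⟨hαT, rfl⟩, hαD.2 (f α) (hf α hαT)⟩
  rw [hCE (f α)] at this
  exact this

section Tree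

universe u

variable (x : Ordinal.{u} → ℕ → Ordinal.{u}) (T : Set Ordinal.{u})

/-- Elements of `T` whose ladder starts with the finite sequence `t`. -/
def LadExt (t : List Ordinal) : Set Ordinal :=
  {α | α ∈ T ∧ ∀ i < t.length, x α i = t.getD i 0}

lemma Ext_nil : LadExt x T [] = T := by
  ext α; simp [LadExt]

variable {x T}

lemma mem_Ext_append {t : List Ordinal} {γ α : Ordinal} :
    α ∈ LadExt x T (t ++ [γ]) ↔ α ∈ LadExt x T t ∧ x α t.length = γ := by
  constructor
  · intro h
    refine ⟨⟨h.1, fun i hi => ?_⟩, ?_⟩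
    · rw [h.2 i (by simp; omega), List.getD_append _ _ _ _ hi]
    · have := h.2 t.length (by simp)
      rwa [List.getD_append_right _ _ _ _ (le_refl _), Nat.sub_self] at this
  · rintro ⟨⟨h1, h2⟩, h3⟩
    refine ⟨h1, fun i hi => ?_⟩
    simp only [List.length_append, List.length_singleton] at hi
    rcases Nat.lt_or_ge i t.length with hlt | hge
    · rw [h2 i hlt, List.getD_append _ _ _ _ hlt]
    · have : i = t.length := by omega
      subst this
      rw [List.getD_append_right _ _ _ _ (le_refl _), Nat.sub_self]
      exact h3

lemma Ext_prefix {u w : List Ordinal} {α : Ordinal} (h : u <+: w) (hα : α ∈ LadExt x T w) :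
    ∀ i < u.length, x α i = u.getD i 0 := by
  obtain ⟨r, rfl⟩ := h
  intro i hi
  rw [hα.2 i (by simp; omega), List.getD_append _ _ _ _ hi]

variable {S : Set Ordinal.{u}} (hx : IsLadderOn S x) (hTS : T ⊆ S)
include hx hTS

lemma ext_extend (t : List Ordinal) (h : IsStat (LadExt x T t)) :
    ∃ γ, IsStat (LadExt x T (t ++ [γ])) := by
  obtain ⟨γ, hγ⟩ := fodor h (fun α => x α t.length)
    (fun α hα => (hx α (hTS hα.1)).2.2.2.1 _)
  refine ⟨γ, hγ.mono ?_⟩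
  rintro α ⟨h1, h2⟩
  exact mem_Ext_append.mpr ⟨h1, h2⟩

lemma ext_branch (t : List Ordinal) (h : IsStat (LadExt x T t)) :
    ∃ u v : List Ordinal, t <+: u ∧ t <+: v ∧ IsStat (LadExt x T u) ∧ IsStat (LadExt x T v) ∧
      ∃ k, k < u.length ∧ k < v.length ∧ (∀ i < k, u.getD i 0 = v.getD i 0) ∧
        u.getD k 0 < v.getD k 0 := by
  by_contra hno
  have huniq : ∀ w γ γ', t <+: w → IsStat (LadExt x T (w ++ [γ])) →
      IsStat (LadExt x T (w ++ [γ'])) → γ = γ' := by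
    intro w γ γ' hpre h1 h2
    by_contra hne
    have hkey : ∀ δ δ' : Ordinal, ∀ i < w.length,
        (w ++ [δ]).getD i 0 = (w ++ [δ']).getD i 0 := by
      intro δ δ' i hi
      rw [List.getD_append _ _ _ _ hi, List.getD_append _ _ _ _ hi]
    have hval : ∀ δ : Ordinal, (w ++ [δ]).getD w.length 0 = δ := by
      intro δ
      rw [List.getD_append_right _ _ _ _ (le_refl _), Nat.sub_self]
      rfl
    have hlen : ∀ δ : Ordinal, w.length < (w ++ [δ]).length := by
      intro δ; simp
    rcases Ne.lt_or_gt hne with hlt | hlt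
    · exact hno ⟨w ++ [γ], w ++ [γ'], hpre.trans (List.prefix_append _ _),
        hpre.trans (List.prefix_append _ _), h1, h2, w.length, hlen γ, hlen γ',
        hkey γ γ', by rw [hval γ, hval γ']; exact hlt⟩
    · exact hno ⟨w ++ [γ'], w ++ [γ], hpre.trans (List.prefix_append _ _),
        hpre.trans (List.prefix_append _ _), h2, h1, w.length, hlen γ', hlen γ,
        hkey γ' γ, by rw [hval γ, hval γ']; exact hlt⟩
  have hstep : ∀ p : {w : List Ordinal // (t <+: w) ∧ IsStat (LadExt x T w)},
      ∃ γ, IsStat (LadExt x T (p.1 ++ [γ])) := fun p => ext_extend hx hTS p.1 p.2.2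
  choose g hg using hstep
  let F : ℕ → {w : List Ordinal // (t <+: w) ∧ IsStat (LadExt x T w)} :=
    fun n => Nat.rec ⟨t, List.prefix_refl t, h⟩
      (fun _ p => ⟨p.1 ++ [g p], (p.2.1).trans (List.prefix_append _ _), hg p⟩) n
  have hFs : ∀ n, (F (n+1)).1 = (F n).1 ++ [g (F n)] := fun n => rfl
  have hlen : ∀ n, (F n).1.length = t.length + n := by
    intro n
    induction n with
    | zero => rfl
    | succ n ih => rw [hFs n]; simp [ih]; omega
  set R : ℕ → Set Ordinal := fun n => LadExt x T (F n).1 \ LadExt x T (F (n+1)).1 with hRdef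
  have hR : ∀ n, ¬ IsStat (R n) := by
    intro n hRs
    obtain ⟨γ', hγ'⟩ := fodor hRs (fun α => x α (F n).1.length)
      (fun α hα => (hx α (hTS hα.1.1)).2.2.2.1 _)
    have hstat' : IsStat (LadExt x T ((F n).1 ++ [γ'])) := by
      refine hγ'.mono ?_
      rintro α ⟨⟨hα1, _⟩, hα3⟩
      exact mem_Ext_append.mpr ⟨hα1, hα3⟩
    have heq : γ' = g (F n) := by
      refine huniq (F n).1 γ' (g (F n)) (F n).2.1 hstat' ?_
      rw [← hFs n]
      exact (F (n+1)).2.2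
    obtain ⟨α, ⟨hα1, hα3⟩⟩ := hγ'.nonempty
    refine hα1.2 ?_
    rw [hFs n]
    exact mem_Ext_append.mpr ⟨hα1.1, by rw [hα3, heq]⟩
  set Z : Set Ordinal := LadExt x T t \ ⋃ n, R n with hZdef
  have hZmem : ∀ α ∈ Z, ∀ n, α ∈ LadExt x T (F n).1 := by
    intro α hα n
    induction n with
    | zero => exact hα.1
    | succ n ih =>
      by_contra hcon
      exact hα.2 (Set.mem_iUnion.mpr ⟨n, ih, hcon⟩)
  have hZ : Z.Subsingleton := by
    intro α hα β hβ
    have hxy : ∀ i, x α i = x β i := by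
      intro i
      have h1 := (hZmem α hα (i+1)).2 i (by rw [hlen (i+1)]; omega)
      have h2 := (hZmem β hβ (i+1)).2 i (by rw [hlen (i+1)]; omega)
      rw [h1, h2]
    have hαS := hx α (hTS hα.1.1)
    have hβS := hx β (hTS hβ.1.1)
    apply le_antisymm
    · apply le_of_forall_lt
      intro c hc
      obtain ⟨n, hn⟩ := hαS.2.2.2.2 c hc
      exact lt_trans (hxy n ▸ hn) (hβS.2.2.2.1 n)
    · apply le_of_forall_lt
      intro c hc
      obtain ⟨n, hn⟩ := hβS.2.2.2.2 c hc
      exact lt_trans ((hxy n).symm ▸ hn) (hαS.2.2.2.1 n)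
  have hcover : LadExt x T t ⊆ ⋃ m, (fun m => Nat.casesOn m Z R) m := by
    intro α hα
    by_cases hc : α ∈ ⋃ n, R n
    · obtain ⟨n, hn⟩ := Set.mem_iUnion.mp hc
      exact Set.mem_iUnion.mpr ⟨n + 1, hn⟩
    · exact Set.mem_iUnion.mpr ⟨0, hα, hc⟩
  obtain ⟨m, hm⟩ := exists_stat_of_iUnion (h.mono hcover)
  cases m with
  | zero => exact not_stat_subsingleton hZ hm
  | succ n => exact hR n hm

end Tree

section Phi

universe v

variable {x : Ordinal.{v} → ℕ → Ordinal.{v}} {T S : Set Ordinal.{v}}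
variable (hx : IsLadderOn S x) (hTS : T ⊆ S) (hT : IsStat (LadExt x T []))

noncomputable def phi : List Bool → {t : List Ordinal.{v} // IsStat (LadExt x T t)}
  | [] => ⟨[], hT⟩
  | false :: r =>
    ⟨(ext_branch hx hTS (phi r).1 (phi r).2).choose,
      (ext_branch hx hTS (phi r).1 (phi r).2).choose_spec.choose_spec.2.2.1⟩
  | true :: r =>
    ⟨(ext_branch hx hTS (phi r).1 (phi r).2).choose_spec.choose,
      (ext_branch hx hTS (phi r).1 (phi r).2).choose_spec.choose_spec.2.2.2.1⟩

lemma phi_prefix_step (b : Bool) (r : List Bool) :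
    (phi hx hTS hT r).1 <+: (phi hx hTS hT (b :: r)).1 := by
  cases b
  · exact (ext_branch hx hTS (phi hx hTS hT r).1
      (phi hx hTS hT r).2).choose_spec.choose_spec.1
  · exact (ext_branch hx hTS (phi hx hTS hT r).1
      (phi hx hTS hT r).2).choose_spec.choose_spec.2.1

lemma phi_prefix (d r : List Bool) :
    (phi hx hTS hT r).1 <+: (phi hx hTS hT (d ++ r)).1 := by
  induction d with
  | nil => exact List.prefix_refl _
  | cons b d ih => exact ih.trans (phi_prefix_step hx hTS hT b (d ++ r))

lemma phi_branch (r : List Bool) :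
    ∃ k, k < (phi hx hTS hT (false :: r)).1.length ∧ k < (phi hx hTS hT (true :: r)).1.length ∧
      (∀ i < k, (phi hx hTS hT (false :: r)).1.getD i 0 = (phi hx hTS hT (true :: r)).1.getD i 0) ∧
      (phi hx hTS hT (false :: r)).1.getD k 0 < (phi hx hTS hT (true :: r)).1.getD k 0 :=
  (ext_branch hx hTS (phi hx hTS hT r).1 (phi hx hTS hT r).2).choose_spec.choose_spec.2.2.2.2

lemma phi_sep (r d1 d2 : List Bool) {α β : Ordinal}
    (hα : α ∈ LadExt x T (phi hx hTS hT (d1 ++ false :: r)).1)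
    (hβ : β ∈ LadExt x T (phi hx hTS hT (d2 ++ true :: r)).1) :
    LexLt x α β := by
  obtain ⟨k, hk1, hk2, hagree, hlt⟩ := phi_branch hx hTS hT r
  have hα' := Ext_prefix (phi_prefix hx hTS hT d1 (false :: r)) hα
  have hβ' := Ext_prefix (phi_prefix hx hTS hT d2 (true :: r)) hβ
  refine ⟨k, fun m hm => ?_, ?_⟩
  · rw [hα' m (lt_trans hm hk1), hβ' m (lt_trans hm hk2), hagree m hm]
  · rw [hα' k hk1, hβ' k hk2]
    exact hlt

end Phi


def TLt : List Bool → List Bool → Prop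
  | [], [] => False
  | [], b :: _ => b = true
  | a :: _, [] => a = false
  | a :: s, b :: t => if a = b then TLt s t else a < b

lemma tlt_irrefl : ∀ s, ¬ TLt s s := by
  intro s
  induction s with
  | nil => simp [TLt]
  | cons a s ih => simpa [TLt] using ih

lemma tlt_trans : ∀ s t u, TLt s t → TLt t u → TLt s u := by
  intro s
  induction s with
  | nil =>
    rintro (_ | ⟨b, t⟩) (_ | ⟨c, u⟩) h1 h2
    · simp [TLt] at h1
    · simp [TLt] at h1
    · cases b <;> simp_all [TLt, Bool.lt_iff]
    · cases b <;> cases c <;> simp_all [TLt, Bool.lt_iff]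
  | cons a s ih =>
    rintro (_ | ⟨b, t⟩) (_ | ⟨c, u⟩) h1 h2
    · simp [TLt] at h2
    · cases a <;> cases c <;> simp_all [TLt, Bool.lt_iff]
    · cases a <;> cases b <;> simp_all [TLt, Bool.lt_iff]
    · cases a <;> cases b <;> cases c <;> simp_all [TLt, Bool.lt_iff] <;>
        exact ih _ _ h1 h2

lemma tlt_trichotomy : ∀ s t, TLt s t ∨ s = t ∨ TLt t s := by
  intro s
  induction s with
  | nil =>
    rintro (_ | ⟨b, t⟩)
    · simp [TLt]
    · cases b <;> simp [TLt]
  | cons a s ih =>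
    rintro (_ | ⟨b, t⟩)
    · cases a <;> simp [TLt]
    · cases a <;> cases b <;> simp_all [TLt, Bool.lt_iff] <;> exact ih t

lemma tlt_append_true (s : List Bool) : TLt s (s ++ [true]) := by
  induction s with
  | nil => simp [TLt]
  | cons a s ih => simpa [TLt] using ih

lemma tlt_append_false (s : List Bool) : TLt (s ++ [false]) s := by
  induction s with
  | nil => simp [TLt]
  | cons a s ih => simpa [TLt] using ih

lemma tlt_dense : ∀ s t, TLt s t → ∃ m, TLt s m ∧ TLt m t := by
  intro s
  induction s with
  | nil =>
    rintro (_ | ⟨b, t⟩) h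
    · simp [TLt] at h
    · simp only [TLt] at h
      subst h
      exact ⟨true :: (t ++ [false]), by simp [TLt], by simpa [TLt] using tlt_append_false t⟩
  | cons a s ih =>
    rintro (_ | ⟨b, t⟩) h
    · simp only [TLt] at h
      subst h
      exact ⟨false :: (s ++ [true]), by simpa [TLt] using tlt_append_true s, by simp [TLt]⟩
    · by_cases hab : a = b
      · subst hab
        simp only [TLt, if_pos rfl] at h
        obtain ⟨m, hm1, hm2⟩ := ih t h
        exact ⟨a :: m, by simpa [TLt] using hm1, by simpa [TLt] using hm2⟩
      · have hab' : a = false ∧ b = true := by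
          simp only [TLt, if_neg hab] at h
          cases a <;> cases b <;> simp_all [Bool.lt_iff]
        obtain ⟨ha, hb⟩ := hab'
        subst ha; subst hb
        exact ⟨false :: (s ++ [true]), by simpa [TLt] using tlt_append_true s, by simp [TLt]⟩

/-- Type synonym for `List Bool` carrying the tree order. -/
def TOrd : Type := List Bool

namespace TOrd

noncomputable instance : LinearOrder TOrd where
  lt := TLt
  le s t := TLt s t ∨ s = t
  le_refl s := Or.inr rfl
  le_trans s t u h1 h2 := by
    rcases h1 with h1 | rfl
    · rcases h2 with h2 | rfl
      · exact Or.inl (tlt_trans _ _ _ h1 h2)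
      · exact Or.inl h1
    · exact h2
  lt_iff_le_not_ge s t := by
    constructor
    · intro h
      refine ⟨Or.inl h, ?_⟩
      rintro (h' | rfl)
      · exact tlt_irrefl _ (tlt_trans _ _ _ h h')
      · exact tlt_irrefl _ h
    · rintro ⟨h1 | rfl, h2⟩
      · exact h1
      · exact absurd (Or.inr rfl) h2
  le_antisymm s t h1 h2 := by
    rcases h1 with h1 | rfl
    · rcases h2 with h2 | rfl
      · exact absurd (tlt_trans _ _ _ h1 h2) (tlt_irrefl s)
      · rfl
    · rfl
  le_total s t := by
    rcases tlt_trichotomy s t with h | rfl | h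
    · exact Or.inl (Or.inl h)
    · exact Or.inl (Or.inr rfl)
    · exact Or.inr (Or.inl h)
  toDecidableLE := fun _ _ => Classical.dec _

lemma lt_iff_tlt {s t : TOrd} : s < t ↔ TLt s t := Iff.rfl

instance : DenselyOrdered TOrd :=
  ⟨fun s t h => by
    obtain ⟨m, h1, h2⟩ := tlt_dense s t h
    exact ⟨m, h1, h2⟩⟩

instance : Countable TOrd := inferInstanceAs (Countable (List Bool))

instance : Nontrivial TOrd := ⟨[], [true], (List.cons_ne_nil true []).symm⟩

end TOrd

/-- The dyadic block encoding killing prefix relations. -/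
def tenc : List Bool → List Bool
  | [] => [false, true]
  | a :: s => a :: a :: tenc s

lemma tenc_split : ∀ s t, TLt s t →
    ∃ c u v, tenc s = c ++ false :: u ∧ tenc t = c ++ true :: v := by
  intro s
  induction s with
  | nil =>
    rintro (_ | ⟨b, t⟩) h
    · simp [TLt] at h
    · simp only [TLt] at h
      subst h
      exact ⟨[], [true], true :: tenc t, by simp [tenc], by simp [tenc]⟩
  | cons a s ih =>
    rintro (_ | ⟨b, t⟩) h
    · simp only [TLt] at h
      subst h
      exact ⟨[false], tenc s, [], by simp [tenc], by simp [tenc]⟩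
    · by_cases hab : a = b
      · subst hab
        simp only [TLt, if_pos rfl] at h
        obtain ⟨c, u, v, hc1, hc2⟩ := ih t h
        exact ⟨a :: a :: c, u, v, by simp [tenc, hc1], by simp [tenc, hc2]⟩
      · have hab' : a = false ∧ b = true := by
          simp only [TLt, if_neg hab] at h
          cases a <;> cases b <;> simp_all [Bool.lt_iff]
        obtain ⟨ha, hb⟩ := hab'
        subst ha; subst hb
        exact ⟨[], false :: tenc s, true :: tenc t, by simp [tenc], by simp [tenc]⟩

/-- A Baumgartner type indexed by a stationary set is not σ-scattered. -/
theorem baumgartner_not_sigma_scattered (S : Set Ordinal) (x : Ordinal → ℕ → Ordinal)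
    (hstat : IsStat S) (hx : IsLadderOn S x) :
    ¬ RelSigmaScatteredOn (LexLt x) S := by
  rintro ⟨A, hU, hScat⟩
  have hstatU : IsStat (⋃ n, A n) := by rwa [hU]
  obtain ⟨n, hTstat⟩ := exists_stat_of_iUnion hstatU
  have hTS : A n ⊆ S := hU ▸ Set.subset_iUnion A n
  have hT0 : IsStat (LadExt x (A n) []) := by rwa [Ext_nil]
  obtain ⟨E⟩ := Order.embedding_from_countable_to_dense ℚ (β := TOrd)
  let addr : ℚ → List Bool := fun q => (tenc (E q)).reverse
  have hmem : ∀ q : ℚ, ((phi hx hTS hT0 (addr q)).2.nonempty).choose ∈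
      LadExt x (A n) (phi hx hTS hT0 (addr q)).1 :=
    fun q => ((phi hx hTS hT0 (addr q)).2.nonempty).choose_spec
  refine hScat n ⟨fun q => ((phi hx hTS hT0 (addr q)).2.nonempty).choose,
    fun q => (hmem q).1, ?_⟩
  intro p q hpq
  have hlt : TLt (E p) (E q) := E.lt_iff_lt.mpr hpq
  obtain ⟨c, u, v, hsu, htv⟩ := tenc_split _ _ hlt
  have h1 : addr p = u.reverse ++ false :: c.reverse := by
    simp [addr, hsu, List.reverse_append]
  have h2 : addr q = v.reverse ++ true :: c.reverse := by
    simp [addr, htv, List.reverse_append]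
  exact phi_sep hx hTS hT0 c.reverse u.reverse v.reverse
    (h1 ▸ hmem p) (h2 ▸ hmem q)
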